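/- Let ℓ be a real number and r an odd integer with 1 ≤ r ≤ ℓ, and define P''(ℓ,r) = Σ 1/b, the sum over all odd integers b with ℓ/2 < b ≤ ℓ and r dividing b. Then |P''(ℓ,r) − ln(2)/(2r)| ≤ 2/ℓ. -/

import Mathlib

open scoped Classical
open Finset

lemma key_upper (k : ℕ) (hk : 1 ≤ k) :
    (1:ℝ)/(2*k+1) ≤ (Real.log (k+1) - Real.log k)/2 := by
  rcases eq_or_lt_of_le hk with h1 | h2
  · rw [← h1]
    have := Real.log_two_gt_d9
    norm_num
    linarith
  · have hk2 : (2:ℕ) ≤ k := h2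
    have hkR : (2:ℝ) ≤ (k:ℝ) := by exact_mod_cast hk2
    set t : ℝ := 1/(2*k+1) with ht
    have hden : (0:ℝ) < 2*k+1 := by positivity
    have ht0 : 0 < t := by positivity
    have ht4 : t ≤ 1/4 := by
      rw [ht, div_le_div_iff₀ hden (by norm_num)]
      linarith
    have habs : |t| < 1 := by rw [abs_of_pos ht0]; linarith
    have habs' : |(-t)| < 1 := by rwa [abs_neg]
    have A := Real.abs_log_sub_add_sum_range_le habs 3
    have B := Real.abs_log_sub_add_sum_range_le habs' 3
    simp only [Finset.sum_range_succ, Finset.sum_range_zero] at A B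
    rw [abs_le] at A B
    rw [abs_of_pos ht0] at A
    rw [abs_neg, abs_of_pos ht0] at B
    norm_num at A B
    have h1t : (0:ℝ) < 1 - t := by linarith
    have e1 : (1:ℝ) - t = 2*k/(2*k+1) := by
      rw [ht]; field_simp; ring
    have e2 : (1:ℝ) - (-t) = (2*k+2)/(2*k+1) := by
      rw [ht]; field_simp; ring
    have l1 : Real.log (1 - t) = Real.log (2*k) - Real.log (2*k+1) := by
      rw [e1, Real.log_div (by positivity) (by positivity)]
    have l2 : Real.log (1 - (-t)) = Real.log (2*k+2) - Real.log (2*k+1) := by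
      rw [e2, Real.log_div (by positivity) (by positivity)]
    have l3 : Real.log (2*(k:ℝ)+2) = Real.log 2 + Real.log (k+1) := by
      rw [show (2*(k:ℝ)+2) = 2*((k:ℝ)+1) by ring,
        Real.log_mul (by norm_num) (by positivity)]
    have l4 : Real.log (2*(k:ℝ)) = Real.log 2 + Real.log k := by
      rw [Real.log_mul (by norm_num) (by positivity)]
    have hE : t^4/(1-t) ≤ (4/3)*t^4 := by
      rw [div_le_iff₀ h1t]
      nlinarith [pow_nonneg ht0.le 4]
    have hcube : 0 ≤ (2/3)*t^3 - (8/3)*t^4 := by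
      nlinarith [pow_nonneg ht0.le 3]
    rw [show (-t)^3 = -(t^3) from by ring] at B
    rw [show (1:ℝ) - -t = 1 + t from by ring] at l2
    linarith [A.2, B.1]

lemma key_lower (k : ℕ) :
    (Real.log (2*(k:ℝ)+3) - Real.log (2*(k:ℝ)+1))/2 ≤ (1:ℝ)/(2*k+1) := by
  have hp : (0:ℝ) < 2*k+1 := by positivity
  have h1 : Real.log (2*(k:ℝ)+3) - Real.log (2*(k:ℝ)+1)
      = Real.log ((2*(k:ℝ)+3)/(2*(k:ℝ)+1)) := by
    rw [Real.log_div (by positivity) (by positivity)]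
  have h2 : Real.log ((2*(k:ℝ)+3)/(2*(k:ℝ)+1)) ≤ (2*(k:ℝ)+3)/(2*(k:ℝ)+1) - 1 :=
    Real.log_le_sub_one_of_pos (by positivity)
  have h3 : (2*(k:ℝ)+3)/(2*(k:ℝ)+1) - 1 = 2/(2*(k:ℝ)+1) := by
    field_simp; ring
  have h4 : 2/(2*(k:ℝ)+1) = 2*(1/(2*(k:ℝ)+1)) := by ring
  rw [h1]
  rw [h3, h4] at h2
  linarith

lemma tele_upper (k0 : ℕ) (hk0 : 1 ≤ k0) : ∀ K : ℕ, k0 ≤ K →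
    ∑ k ∈ Finset.Ico k0 K, (1:ℝ)/(2*k+1) ≤ (Real.log K - Real.log k0)/2 := by
  refine Nat.le_induction ?_ ?_
  · simp
  · intro K hK ih
    rw [Finset.sum_Ico_succ_top hK]
    have hkey := key_upper K (hk0.trans hK)
    push_cast
    push_cast at ih
    linarith

lemma tele_lower (k0 : ℕ) : ∀ K : ℕ, k0 ≤ K →
    (Real.log (2*(K:ℝ)+1) - Real.log (2*(k0:ℝ)+1))/2 ≤ ∑ k ∈ Finset.Ico k0 K, (1:ℝ)/(2*k+1) := by
  refine Nat.le_induction ?_ ?_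
  · simp
  · intro K hK ih
    rw [Finset.sum_Ico_succ_top hK]
    have hkey := key_lower K
    push_cast
    push_cast at ih
    have : 2*((K:ℝ)+1)+1 = 2*(K:ℝ)+3 := by ring
    rw [this]
    linarith

set_option maxHeartbeats 2000000 in
lemma core (L : ℝ) (hL : 1 ≤ L) :
    |(∑ m ∈ (Finset.Icc 1 ⌊L⌋₊).filter (fun m : ℕ => L/2 < (m:ℝ) ∧ Odd m), (1:ℝ)/m)
      - Real.log 2 / 2| ≤ 2/L := by
  have hL0 : 0 < L := by linarith
  obtain ⟨n, hn⟩ : ∃ n, ⌊L⌋₊ = n := ⟨_, rfl⟩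
  have hnL : (n:ℝ) ≤ L := by rw [← hn]; exact Nat.floor_le hL0.le
  have hLn : L < n+1 := by
    rw [← hn]; exact_mod_cast Nat.lt_floor_add_one L
  rw [hn]
  obtain ⟨a, ha⟩ : ∃ a, ⌊L/2⌋₊ = a := ⟨_, rfl⟩
  have haL : (a:ℝ) ≤ L/2 := by rw [← ha]; exact Nat.floor_le (by positivity)
  have hLa : L/2 < a+1 := by
    rw [← ha]; exact_mod_cast Nat.lt_floor_add_one (L/2)
  have hfilter : (Finset.Icc 1 n).filter (fun m : ℕ => L/2 < (m:ℝ) ∧ Odd m)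
      = (Finset.Icc 1 n).filter (fun m : ℕ => a < m ∧ Odd m) := by
    apply Finset.filter_congr
    intro m _
    have : L/2 < (m:ℝ) ↔ a < m := by
      rw [← ha]
      exact (Nat.floor_lt (by positivity)).symm
    rw [this]
  rw [hfilter]
  have hbij : ∑ m ∈ (Finset.Icc 1 n).filter (fun m : ℕ => a < m ∧ Odd m), (1:ℝ)/m
      = ∑ k ∈ Finset.Ico ((a+1)/2) ((n+1)/2), (1:ℝ)/(2*k+1) := by
    apply Finset.sum_nbij' (i := fun m => m/2) (j := fun k => 2*k+1)
    · intro m hm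
      simp only [Finset.mem_filter, Finset.mem_Icc, Nat.odd_iff] at hm
      simp only [Finset.mem_Ico]
      omega
    · intro k hk
      simp only [Finset.mem_Ico] at hk
      simp only [Finset.mem_filter, Finset.mem_Icc, Nat.odd_iff]
      omega
    · intro m hm
      simp only [Finset.mem_filter, Finset.mem_Icc, Nat.odd_iff] at hm
      omega
    · intro k _; omega
    · intro m hm
      simp only [Finset.mem_filter, Finset.mem_Icc, Nat.odd_iff] at hm
      have h2 : (2*(m/2)+1 : ℕ) = m := by omega
      rw [show ((2:ℝ)*(↑(m/2))+1) = ((2*(m/2)+1 : ℕ) : ℝ) by push_cast; ring, h2]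
  rw [hbij]
  set k0 := (a+1)/2 with hk0def
  set K := (n+1)/2 with hKdef
  have hk2 : a ≤ 2*k0 ∧ 2*k0 ≤ a+1 := by omega
  have hK2 : n ≤ 2*K ∧ 2*K ≤ n+1 := by omega
  by_cases h8 : 8 ≤ L
  -- main analytic branch
  · have ha1 : 1 ≤ a := by
      rw [← ha]
      exact Nat.le_floor (by push_cast; linarith)
    have hk01 : 1 ≤ k0 := by omega
    have c1 : (2*k0 : ℝ) ≤ L/2 + 1 := by
      have : ((2*k0 : ℕ) : ℝ) ≤ (a:ℝ) + 1 := by exact_mod_cast hk2.2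
      push_cast at this ⊢
      linarith
    have c2 : L - 1 < (2*K : ℝ) := by
      have : (n:ℝ) ≤ ((2*K : ℕ) : ℝ) := by exact_mod_cast hK2.1
      push_cast at this ⊢
      linarith
    have c3 : L/2 - 1 < (2*k0 : ℝ) := by
      have : (a:ℝ) ≤ ((2*k0 : ℕ) : ℝ) := by exact_mod_cast hk2.1
      push_cast at this ⊢
      linarith
    have c4 : (2*K : ℝ) ≤ L + 1 := by
      have : ((2*K : ℕ) : ℝ) ≤ (n:ℝ) + 1 := by exact_mod_cast hK2.2
      push_cast at this ⊢
      linarith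
    have hk0K : k0 ≤ K := by
      have : (2*k0 : ℝ) < 2*K := by linarith
      have h2 : (2*k0 : ℕ) < 2*K := by exact_mod_cast this
      omega
    have hk0R : (1:ℝ) ≤ (k0:ℝ) := by exact_mod_cast hk01
    have hKR : (1:ℝ) ≤ (K:ℝ) := by
      have : (1:ℕ) ≤ K := le_trans hk01 hk0K
      exact_mod_cast this
    have up := tele_upper k0 hk01 K hk0K
    have lo := tele_lower k0 K hk0K
    -- rephrase logs
    have lK : Real.log (2*(K:ℝ)) = Real.log 2 + Real.log K :=
      Real.log_mul (by norm_num) (by linarith)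
    have lk0 : Real.log (2*(k0:ℝ)) = Real.log 2 + Real.log k0 :=
      Real.log_mul (by norm_num) (by linarith)
    have m1 : Real.log (2*(K:ℝ)) ≤ Real.log (L+1) :=
      Real.log_le_log (by linarith) (by push_cast at c4 ⊢; linarith)
    have m2 : Real.log (L/2-1) ≤ Real.log (2*(k0:ℝ)) :=
      Real.log_le_log (by linarith) (by push_cast at c3 ⊢; linarith)
    have m3 : Real.log L ≤ Real.log (2*(K:ℝ)+1) :=
      Real.log_le_log hL0 (by push_cast at c2 ⊢; linarith)
    have m4 : Real.log (2*(k0:ℝ)+1) ≤ Real.log (L/2+2) :=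
      Real.log_le_log (by positivity) (by push_cast at c1 ⊢; linarith)
    -- upper final
    have u1 : Real.log (L-2) = Real.log 2 + Real.log (L/2-1) := by
      rw [show L-2 = 2*(L/2-1) by ring]
      exact Real.log_mul (by norm_num) (by linarith)
    have u2 : Real.log (L+1) - Real.log (L-2) ≤ 3/(L-2) := by
      have e : Real.log (L+1) - Real.log (L-2) = Real.log ((L+1)/(L-2)) :=
        (Real.log_div (by linarith) (by linarith)).symm
      have hne : L - 2 ≠ 0 := by linarith
      have b := Real.log_le_sub_one_of_pos (show (0:ℝ) < (L+1)/(L-2) from div_pos (by linarith) (by linarith))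
      have e2 : (L+1)/(L-2) - 1 = 3/(L-2) := by
        field_simp
        norm_num
      rw [e]
      linarith [b, e2.symm.le]
    have u3 : 3/(L-2)/2 ≤ 2/L := by
      rw [div_div, div_le_div_iff₀ (by linarith) hL0]
      linarith
    -- lower final
    have v1 : Real.log (L+4) = Real.log 2 + Real.log (L/2+2) := by
      rw [show L+4 = 2*(L/2+2) by ring]
      exact Real.log_mul (by norm_num) (by linarith)
    have v2 : Real.log (L+4) - Real.log L ≤ 4/L := by
      have e : Real.log (L+4) - Real.log L = Real.log ((L+4)/L) :=
        (Real.log_div (by linarith) (by linarith)).symm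
      have b := Real.log_le_sub_one_of_pos (show (0:ℝ) < (L+4)/L by positivity)
      have hne : L ≠ 0 := by linarith
      have e2 : (L+4)/L - 1 = 4/L := by field_simp; ring
      rw [e]
      linarith [b, e2.symm.le]
    have hhalf : (4:ℝ)/L = 2*(2/L) := by ring
    rw [abs_le]
    constructor
    · -- log2/2 - T ≤ 2/L
      linarith
    · linarith
  -- small branch
  · push_neg at h8
    have hn8 : n < 8 := by
      have hx : (n:ℝ) < 8 := lt_of_le_of_lt hnL h8
      exact_mod_cast hx
    have hn1 : 1 ≤ n := by
      have := Nat.le_floor (α := ℝ) (show ((1:ℕ):ℝ) ≤ L by exact_mod_cast hL)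
      omega
    interval_cases n
    · norm_num only at hnL hLn
      -- n = 1
      have haval : a = 0 := by
        have h1 : (a:ℝ) < 0+1 := by linarith
        have h1' : a < 0+1 := by exact_mod_cast h1
        have h2' : (0 : ℕ) < a + 1 := by exact_mod_cast (show ((0:ℕ):ℝ) < (a:ℝ)+1 by push_cast; linarith)
        omega
      subst haval
      have hset : Finset.Ico k0 K = ({0} : Finset ℕ) := by
        rw [hk0def, hKdef]; decide
      rw [hset]
      have hlt : ((1:ℝ) : ℝ) < 2/L := by
        rw [lt_div_iff₀ hL0]; linarith
      have g1 := Real.log_two_gt_d9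
      have g2 := Real.log_two_lt_d9
      rw [abs_le]
      constructor
      · push_cast
        norm_num
        linarith
      · push_cast
        norm_num
        linarith
    · norm_num only at hnL hLn
      -- n = 2
      have haval : a = 1 := by
        have h1 : (a:ℝ) < 1+1 := by linarith
        have h1' : a < 1+1 := by exact_mod_cast h1
        have h2' : (1 : ℕ) < a + 1 := by exact_mod_cast (show ((1:ℕ):ℝ) < (a:ℝ)+1 by push_cast; linarith)
        omega
      subst haval
      have hset : Finset.Ico k0 K = ((∅) : Finset ℕ) := by
        rw [hk0def, hKdef]; decide
      rw [hset]
      have hlt : ((2:ℝ)/3 : ℝ) < 2/L := by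
        rw [lt_div_iff₀ hL0]; linarith
      have g1 := Real.log_two_gt_d9
      have g2 := Real.log_two_lt_d9
      rw [abs_le]
      constructor
      · push_cast
        norm_num
        linarith
      · push_cast
        norm_num
        linarith
    · norm_num only at hnL hLn
      -- n = 3
      have haval : a = 1 := by
        have h1 : (a:ℝ) < 1+1 := by linarith
        have h1' : a < 1+1 := by exact_mod_cast h1
        have h2' : (1 : ℕ) < a + 1 := by exact_mod_cast (show ((1:ℕ):ℝ) < (a:ℝ)+1 by push_cast; linarith)
        omega
      subst haval
      have hset : Finset.Ico k0 K = ({1} : Finset ℕ) := by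
        rw [hk0def, hKdef]; decide
      rw [hset]
      have hlt : ((1:ℝ)/2 : ℝ) < 2/L := by
        rw [lt_div_iff₀ hL0]; linarith
      have g1 := Real.log_two_gt_d9
      have g2 := Real.log_two_lt_d9
      rw [abs_le]
      constructor
      · push_cast
        norm_num
        linarith
      · push_cast
        norm_num
        linarith
    · norm_num only at hnL hLn
      -- n = 4
      have haval : a = 2 := by
        have h1 : (a:ℝ) < 2+1 := by linarith
        have h1' : a < 2+1 := by exact_mod_cast h1
        have h2' : (2 : ℕ) < a + 1 := by exact_mod_cast (show ((2:ℕ):ℝ) < (a:ℝ)+1 by push_cast; linarith)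
        omega
      subst haval
      have hset : Finset.Ico k0 K = ({1} : Finset ℕ) := by
        rw [hk0def, hKdef]; decide
      rw [hset]
      have hlt : ((2:ℝ)/5 : ℝ) < 2/L := by
        rw [lt_div_iff₀ hL0]; linarith
      have g1 := Real.log_two_gt_d9
      have g2 := Real.log_two_lt_d9
      rw [abs_le]
      constructor
      · push_cast
        norm_num
        linarith
      · push_cast
        norm_num
        linarith
    · norm_num only at hnL hLn
      -- n = 5
      have haval : a = 2 := by
        have h1 : (a:ℝ) < 2+1 := by linarith
        have h1' : a < 2+1 := by exact_mod_cast h1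
        have h2' : (2 : ℕ) < a + 1 := by exact_mod_cast (show ((2:ℕ):ℝ) < (a:ℝ)+1 by push_cast; linarith)
        omega
      subst haval
      have hset : Finset.Ico k0 K = ({1,2} : Finset ℕ) := by
        rw [hk0def, hKdef]; decide
      rw [hset]
      have hlt : ((1:ℝ)/3 : ℝ) < 2/L := by
        rw [lt_div_iff₀ hL0]; linarith
      have g1 := Real.log_two_gt_d9
      have g2 := Real.log_two_lt_d9
      rw [abs_le]
      constructor
      · push_cast
        norm_num
        linarith
      · push_cast
        norm_num
        linarith
    · norm_num only at hnL hLn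
      -- n = 6
      have haval : a = 3 := by
        have h1 : (a:ℝ) < 3+1 := by linarith
        have h1' : a < 3+1 := by exact_mod_cast h1
        have h2' : (3 : ℕ) < a + 1 := by exact_mod_cast (show ((3:ℕ):ℝ) < (a:ℝ)+1 by push_cast; linarith)
        omega
      subst haval
      have hset : Finset.Ico k0 K = ({2} : Finset ℕ) := by
        rw [hk0def, hKdef]; decide
      rw [hset]
      have hlt : ((2:ℝ)/7 : ℝ) < 2/L := by
        rw [lt_div_iff₀ hL0]; linarith
      have g1 := Real.log_two_gt_d9
      have g2 := Real.log_two_lt_d9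
      rw [abs_le]
      constructor
      · push_cast
        norm_num
        linarith
      · push_cast
        norm_num
        linarith
    · norm_num only at hnL hLn
      -- n = 7
      have haval : a = 3 := by
        have h1 : (a:ℝ) < 3+1 := by linarith
        have h1' : a < 3+1 := by exact_mod_cast h1
        have h2' : (3 : ℕ) < a + 1 := by exact_mod_cast (show ((3:ℕ):ℝ) < (a:ℝ)+1 by push_cast; linarith)
        omega
      subst haval
      have hset : Finset.Ico k0 K = ({2,3} : Finset ℕ) := by
        rw [hk0def, hKdef]; decide
      rw [hset]
      have hlt : ((1:ℝ)/4 : ℝ) < 2/L := by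
        rw [lt_div_iff₀ hL0]; linarith
      have g1 := Real.log_two_gt_d9
      have g2 := Real.log_two_lt_d9
      rw [abs_le]
      constructor
      · push_cast
        norm_num
        linarith
      · push_cast
        norm_num
        linarith

theorem harmonic_like_sum_P'' (ℓ : ℝ) (r : ℕ) (hr : 1 ≤ r) (hrodd : Odd r)
    (hrℓ : (r : ℝ) ≤ ℓ) :
    |(∑ b ∈ (Finset.Icc 1 ⌊ℓ⌋₊).filter
        (fun (b : ℕ) => ℓ / 2 < (b : ℝ) ∧ r ∣ b ∧ Odd b),
        (1 : ℝ) / b) - Real.log 2 / (2 * r)| ≤ 2 / ℓ := by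
  have hr0 : 0 < r := hr
  have hrR : (1:ℝ) ≤ (r:ℝ) := by exact_mod_cast hr
  have hrR0 : (0:ℝ) < (r:ℝ) := by linarith
  have hℓ0 : (0:ℝ) < ℓ := by linarith
  set L : ℝ := ℓ / r with hLdef
  have hL : 1 ≤ L := (one_le_div hrR0).mpr hrℓ
  have hrL : (r:ℝ) * L = ℓ := by
    rw [hLdef]; field_simp
  have hsum : (∑ b ∈ (Finset.Icc 1 ⌊ℓ⌋₊).filter
        (fun (b : ℕ) => ℓ / 2 < (b : ℝ) ∧ r ∣ b ∧ Odd b), (1 : ℝ) / b)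
      = ∑ m ∈ (Finset.Icc 1 ⌊L⌋₊).filter (fun m : ℕ => L/2 < (m:ℝ) ∧ Odd m),
        (1:ℝ)/r * (1/m) := by
    apply Finset.sum_nbij' (i := fun b => b / r) (j := fun m => r * m)
    · intro b hb
      simp only [Finset.mem_filter, Finset.mem_Icc] at hb
      obtain ⟨⟨hb1, hb2⟩, hb3, hb4, hb5⟩ := hb
      obtain ⟨m, rfl⟩ := hb4
      have hm : r * m / r = m := Nat.mul_div_cancel_left m hr0
      rw [hm]
      simp only [Finset.mem_filter, Finset.mem_Icc]
      have hbR : ((r*m : ℕ):ℝ) ≤ ℓ := by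
        calc ((r*m : ℕ):ℝ) ≤ (⌊ℓ⌋₊ : ℝ) := by exact_mod_cast hb2
        _ ≤ ℓ := Nat.floor_le hℓ0.le
      push_cast at hbR
      push_cast at hb3
      have hmodd : Odd m := (Nat.odd_mul.mp hb5).2
      refine ⟨⟨hmodd.pos, ?_⟩, ?_, hmodd⟩
      · apply Nat.le_floor
        rw [hLdef, le_div_iff₀ hrR0]
        push_cast
        linarith
      · rw [hLdef, div_div, div_lt_iff₀ (by positivity)]
        nlinarith [hb3]
    · intro m hm
      simp only [Finset.mem_filter, Finset.mem_Icc] at hm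
      obtain ⟨⟨hm1, hm2⟩, hm3, hm4⟩ := hm
      simp only [Finset.mem_filter, Finset.mem_Icc]
      have hmL : (m:ℝ) ≤ L :=
        le_trans (by exact_mod_cast hm2 : (m:ℝ) ≤ (⌊L⌋₊:ℝ)) (Nat.floor_le (by linarith))
      have hub : ((r*m : ℕ):ℝ) ≤ ℓ := by
        push_cast
        calc (r:ℝ) * m ≤ (r:ℝ) * L := mul_le_mul_of_nonneg_left hmL (by linarith)
        _ = ℓ := hrL
      have hlb : ℓ/2 < ((r*m : ℕ):ℝ) := by
        push_cast
        rw [hLdef, div_div, div_lt_iff₀ (by positivity)] at hm3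
        linarith
      exact ⟨⟨Nat.mul_pos hr0 hm1, Nat.le_floor hub⟩, hlb, ⟨m, rfl⟩,
        Nat.odd_mul.mpr ⟨hrodd, hm4⟩⟩
    · intro b hb
      simp only [Finset.mem_filter, Finset.mem_Icc] at hb
      obtain ⟨_, _, hdvd, _⟩ := hb
      exact Nat.mul_div_cancel' hdvd
    · intro m _
      exact Nat.mul_div_cancel_left m hr0
    · intro b hb
      simp only [Finset.mem_filter, Finset.mem_Icc] at hb
      obtain ⟨_, _, hdvd, _⟩ := hb
      have hbb : r * (b / r) = b := Nat.mul_div_cancel' hdvd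
      rw [show ((b:ℕ):ℝ) = (r:ℝ) * ((b/r : ℕ):ℝ) by exact_mod_cast hbb.symm]
      rw [one_div, mul_inv, one_div, one_div]
  rw [hsum, ← Finset.mul_sum]
  have habs : |(1:ℝ)/r| = 1/r := abs_of_pos (by positivity)
  have hgoal := core L hL
  have hrw : (1:ℝ)/r * (∑ m ∈ (Finset.Icc 1 ⌊L⌋₊).filter
        (fun m : ℕ => L/2 < (m:ℝ) ∧ Odd m), (1:ℝ)/m) - Real.log 2 / (2*r)
      = (1/r) * ((∑ m ∈ (Finset.Icc 1 ⌊L⌋₊).filter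
        (fun m : ℕ => L/2 < (m:ℝ) ∧ Odd m), (1:ℝ)/m) - Real.log 2 / 2) := by
    field_simp
  rw [hrw, abs_mul, habs]
  have h2L : 2/L = (r:ℝ) * (2/ℓ) := by
    rw [hLdef]
    field_simp
  calc (1:ℝ)/r * |(∑ m ∈ (Finset.Icc 1 ⌊L⌋₊).filter
        (fun m : ℕ => L/2 < (m:ℝ) ∧ Odd m), (1:ℝ)/m) - Real.log 2 / 2|
      ≤ 1/r * (2/L) := by
        apply mul_le_mul_of_nonneg_left hgoal (by positivity)
    _ = 2/ℓ := by
        rw [h2L]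
        field_simp
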